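/- Let 0 < u < 1, m,n ∈ ℕ, and let S be a Binomial(m,u) random variable and N a bounded random variable on the same probability space. Then lim_{ε→0} (1/ε)·Σ_{k=0}^{m} E[N | S = k]·( P{S_ε = k} - P{S = k} ) = Cov(N, S)/(u(1-u)), where S_ε ~ Binomial(m, u+ε). -/

import Mathlib

open MeasureTheory Filter

lemma binom_mean_aux (n : ℕ) (x y : ℝ) :
    ∑ k ∈ Finset.range (n+2), (k:ℝ) * (((n+1).choose k : ℝ) * x^k * y^(n+1-k))
      = (n+1) * x * (x+y)^n := by
  rw [Finset.sum_range_succ']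
  simp only [Nat.cast_zero, zero_mul, add_zero]
  rw [add_pow, Finset.mul_sum]
  refine Finset.sum_congr rfl fun k hk => ?_
  have h2 : ((n:ℝ)+1) * (n.choose k : ℝ) = ((n+1).choose (k+1) : ℝ) * ((k:ℝ)+1) := by
    exact_mod_cast Nat.add_one_mul_choose_eq n k
  have hnk : n + 1 - (k+1) = n - k := by omega
  rw [hnk]
  push_cast
  linear_combination -(x^(k+1)*y^(n-k)) * h2

lemma deriv_alg (a b : ℕ) (u : ℝ) (hu0 : u ≠ 0) (hu1 : (1:ℝ) - u ≠ 0) :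
    (a:ℝ)*u^(a-1)*(1-u)^b - u^a*((b:ℝ)*(1-u)^(b-1))
      = u^a*(1-u)^b * (((a:ℝ) - ((a:ℝ)+(b:ℝ))*u)/(u*(1-u))) := by
  rcases a with _ | a <;> rcases b with _ | b <;>
    simp only [Nat.cast_zero, Nat.cast_succ, Nat.succ_sub_one, pow_zero, zero_mul, mul_zero,
      pow_succ] <;> field_simp <;> ring

/-- Derivative-in-parameter formula: the limit of the ε-difference of binomial
weights against conditional expectations equals `Cov(N,S)/(u(1-u))`. -/
theorem stmt9 {Ω : Type*} [MeasurableSpace Ω] (μ : Measure Ω) [IsProbabilityMeasure μ]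
    (m : ℕ) (u : ℝ) (hu : u ∈ Set.Ioo (0:ℝ) 1)
    (S : Ω → ℕ) (hSmeas : Measurable S) (hSle : ∀ x, S x ≤ m)
    (hS : ∀ k : ℕ, μ {x | S x = k} = ENNReal.ofReal ((m.choose k : ℝ) * u^k * (1-u)^(m-k)))
    (N : Ω → ℝ) (hN : Measurable N) (C : ℝ) (hbd : ∀ x, |N x| ≤ C) :
    Tendsto (fun ε : ℝ => ε⁻¹ * ∑ k ∈ Finset.range (m+1),
        ((∫ x in {x | S x = k}, N x ∂μ) / ((m.choose k : ℝ) * u^k * (1-u)^(m-k))) *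
          ((m.choose k : ℝ) * (u+ε)^k * (1-u-ε)^(m-k)
            - (m.choose k : ℝ) * u^k * (1-u)^(m-k)))
      (nhdsWithin 0 (Set.Ioi 0))
      (nhds (((∫ x, N x * (S x : ℝ) ∂μ)
        - (∫ x, N x ∂μ) * (∫ x, (S x : ℝ) ∂μ)) / (u*(1-u)))) := by
  obtain ⟨hu0, hu1⟩ := hu
  have hu0' : u ≠ 0 := ne_of_gt hu0
  have h1u : (0:ℝ) < 1 - u := by linarith
  have h1u' : (1:ℝ) - u ≠ 0 := ne_of_gt h1u
  have huu : u * (1-u) ≠ 0 := mul_ne_zero hu0' h1u'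
  have hA : ∀ k : ℕ, MeasurableSet {x | S x = k} :=
    fun k => hSmeas (measurableSet_singleton k)
  have hppos : ∀ k ∈ Finset.range (m+1), 0 < (m.choose k : ℝ) * u^k * (1-u)^(m-k) := by
    intro k hk
    have hk' : k ≤ m := Nat.lt_succ_iff.mp (Finset.mem_range.mp hk)
    exact mul_pos (mul_pos (by exact_mod_cast Nat.choose_pos hk') (pow_pos hu0 k))
      (pow_pos h1u _)
  -- integrability
  have hSR : Measurable fun x => ((S x : ℕ) : ℝ) := measurable_from_top.comp hSmeas
  have hNint : Integrable N μ :=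
    Integrable.mono' (integrable_const C) hN.aestronglyMeasurable
      (Eventually.of_forall fun x => by simpa [Real.norm_eq_abs] using hbd x)
  have hne : Nonempty Ω := MeasureTheory.Measure.nonempty_of_neZero μ
  have hC0 : 0 ≤ C := le_trans (abs_nonneg _) (hbd (Classical.arbitrary Ω))
  have hNSint : Integrable (fun x => N x * (S x : ℝ)) μ := by
    refine Integrable.mono' (integrable_const (C * m)) (hN.mul hSR).aestronglyMeasurable
      (Eventually.of_forall fun x => ?_)
    rw [Real.norm_eq_abs, abs_mul]
    have h1 : |((S x : ℕ):ℝ)| ≤ (m:ℝ) := by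
      rw [abs_of_nonneg (Nat.cast_nonneg _)]; exact_mod_cast hSle x
    exact mul_le_mul (hbd x) h1 (abs_nonneg _) hC0
  have hSint : Integrable (fun x => ((S x : ℕ):ℝ)) μ := by
    refine Integrable.mono' (integrable_const (m:ℝ)) hSR.aestronglyMeasurable
      (Eventually.of_forall fun x => ?_)
    rw [Real.norm_eq_abs, abs_of_nonneg (Nat.cast_nonneg _)]; exact_mod_cast hSle x
  -- partition
  have hcover : (⋃ k ∈ Finset.range (m+1), {x | S x = k}) = Set.univ := by
    ext x
    simp only [Set.mem_iUnion, Set.mem_univ, iff_true, Finset.mem_range, Set.mem_setOf_eq]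
    exact ⟨S x, Nat.lt_succ_of_le (hSle x), rfl⟩
  have hdisj : (↑(Finset.range (m+1)) : Set ℕ).Pairwise
      (Function.onFun Disjoint fun k => {x | S x = k}) := by
    intro i _ j _ hij
    simp only [Function.onFun, Set.disjoint_left, Set.mem_setOf_eq]
    intro x hx hy
    exact hij (hx.symm.trans hy)
  have hsplit : ∀ f : Ω → ℝ, Integrable f μ →
      ∫ x, f x ∂μ = ∑ k ∈ Finset.range (m+1), ∫ x in {x | S x = k}, f x ∂μ := by
    intro f hf
    rw [← setIntegral_univ, ← hcover,
      integral_biUnion_finset _ (fun k _ => hA k) hdisj (fun k _ => hf.integrableOn)]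
  have hμA : ∀ k, (μ {x | S x = k}).toReal = (m.choose k : ℝ) * u^k * (1-u)^(m-k) := by
    intro k
    rw [hS k, ENNReal.toReal_ofReal
      (mul_nonneg (mul_nonneg (Nat.cast_nonneg _) (pow_nonneg hu0.le k)) (pow_nonneg h1u.le _))]
  have hNsum : ∫ x, N x ∂μ = ∑ k ∈ Finset.range (m+1), ∫ x in {x | S x = k}, N x ∂μ :=
    hsplit N hNint
  have hNSsum : ∫ x, N x * (S x : ℝ) ∂μ
      = ∑ k ∈ Finset.range (m+1), (k:ℝ) * ∫ x in {x | S x = k}, N x ∂μ := by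
    rw [hsplit _ hNSint]
    refine Finset.sum_congr rfl fun k hk => ?_
    have : ∫ x in {x | S x = k}, N x * (S x : ℝ) ∂μ
        = ∫ x in {x | S x = k}, N x * (k:ℝ) ∂μ := by
      refine setIntegral_congr_fun (hA k) fun x hx => ?_
      rw [Set.mem_setOf_eq] at hx
      rw [hx]
    rw [this, integral_mul_const, mul_comm]
  have hSsum : ∫ x, ((S x : ℕ):ℝ) ∂μ = m * u := by
    rw [hsplit _ hSint]
    have h1 : ∀ k ∈ Finset.range (m+1), ∫ x in {x | S x = k}, ((S x : ℕ):ℝ) ∂μ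
        = (k:ℝ) * ((m.choose k : ℝ) * u^k * (1-u)^(m-k)) := by
      intro k hk
      have : ∫ x in {x | S x = k}, ((S x : ℕ):ℝ) ∂μ = ∫ _ in {x | S x = k}, (k:ℝ) ∂μ := by
        refine setIntegral_congr_fun (hA k) fun x hx => ?_
        rw [Set.mem_setOf_eq] at hx
        rw [hx]
      rw [this, setIntegral_const, measureReal_def, hμA k, smul_eq_mul, mul_comm]
    rw [Finset.sum_congr rfl h1]
    cases m with
    | zero => simp
    | succ n =>
      have h2 := binom_mean_aux n u (1-u)
      rw [show u + (1-u) = 1 by ring, one_pow, mul_one] at h2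
      rw [show n + 1 + 1 = n + 2 from rfl] at *
      rw [h2]
      push_cast
      ring
  -- derivative of each binomial weight
  have hderiv : ∀ k ∈ Finset.range (m+1), HasDerivAt
      (fun ε : ℝ => (m.choose k:ℝ) * (u+ε)^k * (1-u-ε)^(m-k))
      (((m.choose k : ℝ) * u^k * (1-u)^(m-k)) * (((k:ℝ) - (m:ℝ)*u)/(u*(1-u)))) 0 := by
    intro k hk
    have hk' : k ≤ m := Nat.lt_succ_iff.mp (Finset.mem_range.mp hk)
    have h1 : HasDerivAt (fun ε : ℝ => u + ε) 1 0 := by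
      simpa using (hasDerivAt_id (0:ℝ)).const_add u
    have h2 : HasDerivAt (fun ε : ℝ => 1 - u - ε) (-1) 0 := by
      simpa using (hasDerivAt_id (0:ℝ)).const_sub (1-u)
    have h3 := ((h1.pow k).mul (h2.pow (m-k))).const_mul ((m.choose k:ℝ))
    have hmk : ((m-k:ℕ):ℝ) = (m:ℝ) - (k:ℝ) := Nat.cast_sub hk'
    have h5 := deriv_alg k (m-k) u hu0' h1u'
    rw [hmk] at h5
    convert h3 using 1
    · rfl
    · rfl
    · funext ε; simp only [Pi.mul_apply, Pi.pow_apply]; ring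
    · rw [hmk]
      simp only [add_zero, sub_zero, mul_one, mul_neg_one, Pi.pow_apply]
      linear_combination -((m.choose k:ℝ)) * h5
  -- derivative of the sum
  have hG : HasDerivAt
      (fun ε : ℝ => ∑ k ∈ Finset.range (m+1),
        ((∫ x in {x | S x = k}, N x ∂μ) / ((m.choose k : ℝ) * u^k * (1-u)^(m-k))) *
          ((m.choose k:ℝ) * (u+ε)^k * (1-u-ε)^(m-k)))
      (∑ k ∈ Finset.range (m+1),
        ((∫ x in {x | S x = k}, N x ∂μ) / ((m.choose k : ℝ) * u^k * (1-u)^(m-k))) *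
          (((m.choose k : ℝ) * u^k * (1-u)^(m-k)) * (((k:ℝ) - (m:ℝ)*u)/(u*(1-u))))) 0 :=
    HasDerivAt.fun_sum fun k hk => (hderiv k hk).const_mul _
  -- identify the derivative value
  have hD : (∑ k ∈ Finset.range (m+1),
        ((∫ x in {x | S x = k}, N x ∂μ) / ((m.choose k : ℝ) * u^k * (1-u)^(m-k))) *
          (((m.choose k : ℝ) * u^k * (1-u)^(m-k)) * (((k:ℝ) - (m:ℝ)*u)/(u*(1-u)))))
      = ((∫ x, N x * (S x : ℝ) ∂μ)
        - (∫ x, N x ∂μ) * (∫ x, (S x : ℝ) ∂μ)) / (u*(1-u)) := by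
    rw [hNSsum, hNsum, hSsum]
    rw [eq_div_iff huu, Finset.sum_mul, Finset.sum_mul, ← Finset.sum_sub_distrib]
    refine Finset.sum_congr rfl fun k hk => ?_
    have hpne := (hppos k hk).ne'
    have hcne : (m.choose k : ℝ) ≠ 0 := by
      exact_mod_cast (Nat.choose_pos (Nat.lt_succ_iff.mp (Finset.mem_range.mp hk))).ne'
    field_simp
  rw [← hD]
  have htends := (hasDerivAt_iff_tendsto_slope.mp hG).mono_left
    (nhdsWithin_mono 0 (fun x hx => Set.mem_compl_singleton_iff.mpr (ne_of_gt hx)))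
  refine htends.congr fun ε => ?_
  rw [slope_def_field]
  simp only [add_zero, sub_zero]
  rw [div_eq_inv_mul]
  congr 1
  rw [← Finset.sum_sub_distrib]
  exact Finset.sum_congr rfl fun k hk => (mul_sub _ _ _).symm
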